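/- Parity of homogeneous Casimirs of the sp(2,ℝ) Lie–Poisson structure: on MvPolynomial (Fin 3) ℝ with variables x = X 0, y = X 1, z = X 2, define the bracket {f, g} := z·(∂_x f·∂_y g − ∂_y f·∂_x g) + 2x·(∂_z f·∂_x g − ∂_x f·∂_z g) − 2y·(∂_z f·∂_y g − ∂_y f·∂_z g), where ∂_i = pderiv i. For w : ℕ, the ℝ-dimension of the space { f ∈ homogeneousSubmodule (Fin 3) ℝ w | {f, g} = 0 for all g } equals 1 if w is even and 0 if w is odd. -/

import Mathlib

open MvPolynomial

/-- The Lie–Poisson bracket of `sp(ℝ²) ≅ sl(2,ℝ)` on `ℝ³` with coordinates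
`x = X 0`, `y = X 1`, `z = X 2`:
`{f, g} = z(∂ₓf ∂_yg − ∂_yf ∂ₓg) + 2x(∂_zf ∂ₓg − ∂ₓf ∂_zg) − 2y(∂_zf ∂_yg − ∂_yf ∂_zg)`. -/
noncomputable def spBracket (f g : MvPolynomial (Fin 3) ℝ) : MvPolynomial (Fin 3) ℝ :=
  X 2 * (pderiv 0 f * pderiv 1 g - pderiv 1 f * pderiv 0 g)
    + 2 * X 0 * (pderiv 2 f * pderiv 0 g - pderiv 0 f * pderiv 2 g)
    - 2 * X 1 * (pderiv 2 f * pderiv 1 g - pderiv 1 f * pderiv 2 g)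

/-- The space of homogeneous degree-`w` Casimir polynomials of the `sp(ℝ²)`
Lie–Poisson structure: `{ f ∈ homogeneousSubmodule w | ∀ g, {f,g} = 0 }`. -/
noncomputable def spCasimir (w : ℕ) : Submodule ℝ (MvPolynomial (Fin 3) ℝ) where
  carrier := {f | f ∈ homogeneousSubmodule (Fin 3) ℝ w ∧ ∀ g, spBracket f g = 0}
  zero_mem' := ⟨Submodule.zero_mem _, fun g => by simp [spBracket]⟩
  add_mem' := by
    rintro a b ⟨ha1, ha2⟩ ⟨hb1, hb2⟩
    refine ⟨Submodule.add_mem _ ha1 hb1, fun g => ?_⟩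
    have h1 := ha2 g
    have h2 := hb2 g
    simp only [spBracket, map_add] at h1 h2 ⊢
    linear_combination h1 + h2
  smul_mem' := by
    rintro c a ⟨ha1, ha2⟩
    refine ⟨Submodule.smul_mem _ c ha1, fun g => ?_⟩
    have h := ha2 g
    simp only [spBracket]
    simp only [Derivation.map_smul]
    simp only [smul_eq_C_mul]
    simp only [spBracket] at h
    linear_combination (C c : MvPolynomial (Fin 3) ℝ) * h

lemma my_coeff_pderiv {σ R : Type*} [CommSemiring R] [DecidableEq σ] (i : σ)
    (m : σ →₀ ℕ) (f : MvPolynomial σ R) :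
    coeff m (pderiv i f) = (m i + 1) * coeff (m + Finsupp.single i 1) f := by
  induction f using MvPolynomial.induction_on' with
  | monomial s a =>
    rw [pderiv_monomial, coeff_monomial, coeff_monomial]
    by_cases hs : s = m + Finsupp.single i 1
    · subst hs
      have h1 : m + Finsupp.single i 1 - Finsupp.single i 1 = m := by simp
      rw [if_pos h1, if_pos rfl]
      push_cast
      simp
      ring
    · rw [if_neg hs]
      by_cases h2 : s - Finsupp.single i 1 = m
      · by_cases h3 : s i = 0
        · simp [h3]
        · exfalso
          apply hs
          rw [← h2, tsub_add_cancel_of_le]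
          rwa [Finsupp.single_le_iff, Nat.one_le_iff_ne_zero]
      · rw [if_neg h2]; ring
  | add p q hp hq => simp [hp, hq]; ring

lemma my_coeff_X_mul_pderiv (i : Fin 3) (m : Fin 3 →₀ ℕ) (f : MvPolynomial (Fin 3) ℝ) :
    coeff m (X i * pderiv i f) = (m i : ℝ) * coeff m f := by
  rw [coeff_X_mul']
  by_cases h : i ∈ m.support
  · rw [if_pos h, my_coeff_pderiv]
    have hne : m i ≠ 0 := Finsupp.mem_support_iff.mp h
    have h1 : (m - Finsupp.single i 1) + Finsupp.single i 1 = m :=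
      tsub_add_cancel_of_le (by rwa [Finsupp.single_le_iff, Nat.one_le_iff_ne_zero])
    rw [h1]
    have h3 : ((m - Finsupp.single i 1 : Fin 3 →₀ ℕ)) i + 1 = m i := by
      have h4 := DFunLike.congr_fun h1 i
      simpa using h4
    rw [← h3]
    push_cast
    ring
  · rw [if_neg h]
    have : m i = 0 := Finsupp.notMem_support_iff.mp h
    simp [this]

/-- helper monomial -/
noncomputable def Mm (p q r : ℕ) : Fin 3 →₀ ℕ :=
  Finsupp.single 0 p + Finsupp.single 1 q + Finsupp.single 2 r

lemma Mm_apply0 (p q r : ℕ) : Mm p q r 0 = p := by simp [Mm, Finsupp.single_apply]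
lemma Mm_apply1 (p q r : ℕ) : Mm p q r 1 = q := by simp [Mm, Finsupp.single_apply]
lemma Mm_apply2 (p q r : ℕ) : Mm p q r 2 = r := by simp [Mm, Finsupp.single_apply]

lemma Mm_eq_self (m : Fin 3 →₀ ℕ) : m = Mm (m 0) (m 1) (m 2) := by
  ext i
  fin_cases i <;> simp [Mm, Finsupp.single_apply]

lemma Mm_succ0 (p q r : ℕ) : Mm (p+1) q r = Finsupp.single 0 1 + Mm p q r := by
  ext i; fin_cases i <;> simp [Mm, Finsupp.single_apply] <;> omega

lemma Mm_succ2 (p q r : ℕ) : Mm p q (r+1) = Finsupp.single 2 1 + Mm p q r := by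
  ext i; fin_cases i <;> simp [Mm, Finsupp.single_apply] <;> omega

lemma Mm_add1 (p q r : ℕ) : Mm p q r + Finsupp.single 1 1 = Mm p (q+1) r := by
  ext i; fin_cases i <;> simp [Mm, Finsupp.single_apply]

lemma Mm_add2 (p q r : ℕ) : Mm p q r + Finsupp.single 2 1 = Mm p q (r+1) := by
  ext i; fin_cases i <;> simp [Mm, Finsupp.single_apply]

lemma degree_fin3 (d : Fin 3 →₀ ℕ) : d.degree = d 0 + d 1 + d 2 := by
  rw [Finsupp.degree_apply, Finset.sum_subset (Finset.subset_univ d.support)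
    (fun i _ hi => Finsupp.notMem_support_iff.mp hi), Fin.sum_univ_three]

/-- Key uniqueness lemma. -/
lemma keyU (w : ℕ) (f : MvPolynomial (Fin 3) ℝ) (hf : f ∈ spCasimir w)
    (h0 : coeff (Mm (w/2) (w/2) 0) f = 0) : f = 0 := by
  obtain ⟨hhom, hbr⟩ := hf
  rw [mem_homogeneousSubmodule] at hhom
  have hA : 2 * (X 0 * pderiv 2 f) = X 2 * pderiv 1 f := by
    have h := hbr (X 0)
    simp only [spBracket, pderiv_X_self,
      pderiv_X_of_ne (show (0:Fin 3) ≠ 1 by decide),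
      pderiv_X_of_ne (show (0:Fin 3) ≠ 2 by decide)] at h
    linear_combination h
  have hC : X 0 * pderiv 0 f = X 1 * pderiv 1 f := by
    have h := hbr (X 2)
    simp only [spBracket, pderiv_X_self,
      pderiv_X_of_ne (show (2:Fin 3) ≠ 0 by decide),
      pderiv_X_of_ne (show (2:Fin 3) ≠ 1 by decide)] at h
    have h2 : (2 : MvPolynomial (Fin 3) ℝ) * (X 0 * pderiv 0 f)
        = 2 * (X 1 * pderiv 1 f) := by linear_combination -h
    have hne2 : (2 : MvPolynomial (Fin 3) ℝ) ≠ 0 := by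
      intro habs
      have h3 := congrArg (eval (fun _ => (0:ℝ))) habs
      simp [map_ofNat] at h3
    exact mul_left_cancel₀ hne2 h2
  have hdiag : ∀ m : Fin 3 →₀ ℕ, m 0 ≠ m 1 → coeff m f = 0 := by
    intro m hm
    have e := congrArg (coeff m) hC
    rw [my_coeff_X_mul_pderiv, my_coeff_X_mul_pderiv] at e
    have h1 : ((m 0 : ℝ) - m 1) * coeff m f = 0 := by linarith
    rcases mul_eq_zero.mp h1 with h | h
    · exfalso; apply hm; exact_mod_cast sub_eq_zero.mp h
    · exact h
  have main : ∀ k n, coeff (Mm n n k) f = 0 := by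
    intro k
    induction k using Nat.strong_induction_on with
    | _ k ih =>
      intro n
      by_contra hne
      have hdeg : (Mm n n k).degree = w := by
        by_contra hd
        exact hne (hhom.coeff_eq_zero hd)
      rw [degree_fin3, Mm_apply0, Mm_apply1, Mm_apply2] at hdeg
      match k with
      | 0 =>
        apply hne
        have hw : w / 2 = n := by omega
        rw [← hw] at *
        exact h0
      | (k+1) =>
        -- use hA at ν = Mm (n+1) n k
        have e := congrArg (coeff (Mm (n+1) n k)) hA
        rw [Mm_succ0] at e
        -- LHS
        have eL : coeff (Finsupp.single 0 1 + Mm n n k) (2 * (X 0 * pderiv 2 f))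
            = 2 * ((k : ℝ) + 1) * coeff (Mm n n (k+1)) f := by
          rw [show (2 : MvPolynomial (Fin 3) ℝ) * (X 0 * pderiv 2 f)
              = C 2 * (X 0 * pderiv 2 f) by rw [map_ofNat],
            coeff_C_mul, coeff_X_mul, my_coeff_pderiv, Mm_apply2, Mm_add2]
          ring
        rw [eL] at e
        have hR : coeff (Finsupp.single 0 1 + Mm n n k) (X 2 * pderiv 1 f) = 0 := by
          rw [← Mm_succ0, coeff_X_mul']
          match k, ih with
          | 0, _ =>
            rw [if_neg]
            simp [Mm_apply2]
          | (k+1), ih =>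
            rw [if_pos (by simp [Finsupp.mem_support_iff, Mm_apply2])]
            have hsub : Mm (n+1) n (k+1) - Finsupp.single 2 1 = Mm (n+1) n k := by
              rw [Mm_succ2]; simp
            rw [hsub, my_coeff_pderiv, Mm_apply1, Mm_add1]
            rw [ih k (by omega) (n+1)]
            ring
        rw [hR] at e
        apply hne
        have h2 : (2 * ((k:ℝ)+1)) ≠ 0 := by positivity
        exact (mul_eq_zero.mp e).resolve_left h2
  ext m
  rcases eq_or_ne (m 0) (m 1) with he | he
  · rw [Mm_eq_self m, he]
    simpa using main (m 2) (m 1)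
  · simpa using hdiag m he

noncomputable def casC : MvPolynomial (Fin 3) ℝ := X 2 * X 2 + C 4 * (X 0 * X 1)

lemma spBracket_casC (g : MvPolynomial (Fin 3) ℝ) : spBracket casC g = 0 := by
  have d0 : pderiv 0 casC = C 4 * X 1 := by
    simp [casC, pderiv_X_of_ne (show (0:Fin 3) ≠ 2 by decide)]
  have d1 : pderiv 1 casC = C 4 * X 0 := by
    simp [casC, pderiv_X_of_ne (show (1:Fin 3) ≠ 2 by decide),
      pderiv_X_of_ne (show (1:Fin 3) ≠ 0 by decide)]
  have d2 : pderiv 2 casC = X 2 + X 2 := by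
    simp [casC, pderiv_X_of_ne (show (2:Fin 3) ≠ 0 by decide),
      pderiv_X_of_ne (show (2:Fin 3) ≠ 1 by decide)]
  simp only [spBracket, d0, d1, d2]
  rw [(map_ofNat C 4 : (C 4 : MvPolynomial (Fin 3) ℝ) = 4)]
  ring

lemma spBracket_mul (a b g : MvPolynomial (Fin 3) ℝ) :
    spBracket (a * b) g = a * spBracket b g + b * spBracket a g := by
  simp only [spBracket, pderiv_mul]
  ring

lemma spBracket_casC_pow (n : ℕ) (g : MvPolynomial (Fin 3) ℝ) :
    spBracket (casC ^ n) g = 0 := by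
  induction n with
  | zero =>
    simp [spBracket, show pderiv 0 (1 : MvPolynomial (Fin 3) ℝ) = 0 from pderiv_one,
      show pderiv 1 (1 : MvPolynomial (Fin 3) ℝ) = 0 from pderiv_one,
      show pderiv 2 (1 : MvPolynomial (Fin 3) ℝ) = 0 from pderiv_one]
  | succ n ih =>
    rw [pow_succ, spBracket_mul, ih, spBracket_casC]
    ring

lemma casC_isHomogeneous : casC.IsHomogeneous 2 := by
  have h1 : (X 2 * X 2 : MvPolynomial (Fin 3) ℝ).IsHomogeneous 2 :=
    (isHomogeneous_X _ _).mul (isHomogeneous_X _ _)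
  have h2 : (C 4 * (X 0 * X 1) : MvPolynomial (Fin 3) ℝ).IsHomogeneous 2 := by
    have := (isHomogeneous_C (Fin 3) (4:ℝ)).mul
      ((isHomogeneous_X ℝ (0 : Fin 3)).mul (isHomogeneous_X ℝ (1 : Fin 3)))
    simpa using this
  exact h1.add h2

lemma casC_ne_zero : casC ≠ 0 := by
  intro h
  have : eval (fun i => if i = 2 then (1:ℝ) else 0) casC = 1 := by
    simp [casC]
  rw [h] at this
  simp at this

lemma casC_pow_mem (n : ℕ) : casC ^ n ∈ spCasimir (2 * n) := by
  constructor
  · rw [mem_homogeneousSubmodule]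
    simpa [mul_comm] using casC_isHomogeneous.pow n
  · exact spBracket_casC_pow n


set_option synthInstance.maxHeartbeats 1000000 in
/-- **Parity of homogeneous Casimirs of the `sp(2,ℝ)` Lie–Poisson structure.**
For every `w : ℕ`, the space of degree-`w` homogeneous Casimir polynomials has
dimension `1` if `w` is even and `0` if `w` is odd. -/
theorem finrank_spCasimir (w : ℕ) :
    Module.finrank ℝ (spCasimir w) = if Even w then 1 else 0 := by
  by_cases hw : Even w
  · rw [if_pos hw]
    obtain ⟨n, hn⟩ := hw
    have hw2 : w = 2 * n := by omega
    set φ : spCasimir w →ₗ[ℝ] ℝ :=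
      (lcoeff ℝ (Mm (w/2) (w/2) 0)).comp (spCasimir w).subtype with hφ
    have hinj : Function.Injective φ := by
      rw [← LinearMap.ker_eq_bot, LinearMap.ker_eq_bot']
      intro ⟨f, hfm⟩ hf0
      have : f = 0 := keyU w f hfm (by simpa [hφ, lcoeff] using hf0)
      exact Subtype.ext this
    have : FiniteDimensional ℝ (spCasimir w) := FiniteDimensional.of_injective φ hinj
    have hle : Module.finrank ℝ (spCasimir w) ≤ 1 := by
      have := LinearMap.finrank_le_finrank_of_injective hinj
      simpa using this
    have hmem : casC ^ n ∈ spCasimir w := by rw [hw2]; exact casC_pow_mem n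
    have hpos : 0 < Module.finrank ℝ (spCasimir w) := by
      rw [Module.finrank_pos_iff]
      refine ⟨⟨casC ^ n, hmem⟩, 0, ?_⟩
      intro h
      exact pow_ne_zero n casC_ne_zero (by simpa using congrArg Subtype.val h)
    omega
  · rw [if_neg hw]
    have : spCasimir w = ⊥ := by
      rw [eq_bot_iff]
      intro f hfm
      have h0 : coeff (Mm (w/2) (w/2) 0) f = 0 := by
        have hhom := (mem_homogeneousSubmodule _ _).mp hfm.1
        apply hhom.coeff_eq_zero
        rw [degree_fin3, Mm_apply0, Mm_apply1, Mm_apply2]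
        have hodd : w % 2 = 1 := Nat.odd_iff.mp (Nat.not_even_iff_odd.mp hw)
        omega
      simpa using keyU w f hfm h0
    rw [this]
    simp
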